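/- If (𝒞, 𝒦) is a proximity domain, then any system of islands corresponding to (𝒞, 𝒦) is a distant family. -/

import Mathlib

open Finset

variable {U : Type*}

/-- `K` covers `S` in the poset `(𝒦, ⊆)`. -/
def Covers (𝒦 : Finset (Finset U)) (S K : Finset U) : Prop :=
  S ⊂ K ∧ ∀ K' ∈ 𝒦, S ⊂ K' → ¬K' ⊂ K

/-- `min h(K) < min h(S)` (for nonempty finite `S`, `K`). -/
def MinLt (h : U → ℝ) (K S : Finset U) : Prop :=
  ∃ k ∈ K, ∀ s ∈ S, h k < h s

/-- `S` is a pre-island with respect to `(𝒞, 𝒦, h)`. -/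
def IsPreIsland (𝒞 𝒦 : Finset (Finset U)) (h : U → ℝ) (S : Finset U) : Prop :=
  S ∈ 𝒞 ∧ S.Nonempty ∧ ∀ K ∈ 𝒦, Covers 𝒦 S K → MinLt h K S

/-- `S` is an island with respect to `(𝒞, 𝒦, h)`. -/
def IsIsland [DecidableEq U] (𝒞 𝒦 : Finset (Finset U)) (h : U → ℝ) (S : Finset U) : Prop :=
  S ∈ 𝒞 ∧ S.Nonempty ∧ ∀ K ∈ 𝒦, Covers 𝒦 S K → ∀ u ∈ K \ S, ∀ s ∈ S, h u < h s

/-- `(𝒞, 𝒦)` is an island domain on `U`. -/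
def IslandDomain [Fintype U] (𝒞 𝒦 : Finset (Finset U)) : Prop :=
  𝒞 ⊆ 𝒦 ∧ Finset.univ ∈ 𝒞

/-- `ℋ` is admissible with respect to `(𝒞, 𝒦)`. -/
def Admissible [DecidableEq U] [Fintype U] (𝒞 𝒦 ℋ : Finset (Finset U)) : Prop :=
  ℋ ⊆ 𝒞 ∧ (∅ : Finset U) ∉ ℋ ∧ Finset.univ ∈ ℋ ∧
    ∀ 𝒜 ⊆ ℋ, 𝒜.Nonempty → (∀ A ∈ 𝒜, ∀ B ∈ 𝒜, A ⊆ B → A = B) →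
      ∃ H ∈ 𝒜, ∀ K ∈ 𝒦, H ⊂ K → ¬K ⊆ 𝒜.sup id

/-- `𝒮` is the system of pre-islands corresponding to `(𝒞, 𝒦, h)` for some `h`. -/
def IsSystemOfPreIslands (𝒞 𝒦 𝒮 : Finset (Finset U)) : Prop :=
  ∃ h : U → ℝ, ∀ S, S ∈ 𝒮 ↔ IsPreIsland 𝒞 𝒦 h S

/-- `𝒮` is the system of islands corresponding to `(𝒞, 𝒦, h)` for some `h`. -/
def IsSystemOfIslands [DecidableEq U] (𝒞 𝒦 𝒮 : Finset (Finset U)) : Prop :=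
  ∃ h : U → ℝ, ∀ S, S ∈ 𝒮 ↔ IsIsland 𝒞 𝒦 h S

/-- `(𝒞, 𝒦)` is a connective island domain. -/
def Connective [DecidableEq U] (𝒞 𝒦 : Finset (Finset U)) : Prop :=
  ∀ A ∈ 𝒞, ∀ B ∈ 𝒞, (A ∩ B).Nonempty → ¬B ⊆ A → ∃ K ∈ 𝒦, A ⊂ K ∧ K ⊆ A ∪ B

/-- Any two members are comparable or disjoint. -/
def CDIndependent [DecidableEq U] (ℋ : Finset (Finset U)) : Prop :=
  ∀ A ∈ ℋ, ∀ B ∈ ℋ, A ⊆ B ∨ B ⊆ A ∨ A ∩ B = ∅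

def WeaklyIndependent [DecidableEq U] (ℋ : Finset (Finset U)) : Prop :=
  ∀ H ∈ ℋ, ∀ 𝒢 ⊆ ℋ, 𝒢.Nonempty → H ⊆ 𝒢.sup id → ∃ G ∈ 𝒢, H ⊆ G

def CDWIndependent [DecidableEq U] (ℋ : Finset (Finset U)) : Prop :=
  CDIndependent ℋ ∧ WeaklyIndependent ℋ

/-- The proximity relation `δ`: `A δ B` iff some `K ∈ 𝒦` with `A ⪯ K` meets `B`. -/
def Delta [DecidableEq U] (𝒦 : Finset (Finset U)) (A B : Finset U) : Prop :=
  ∃ K ∈ 𝒦, (K = A ∨ Covers 𝒦 A K) ∧ (K ∩ B).Nonempty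

def Distant [DecidableEq U] (𝒦 : Finset (Finset U)) (A B : Finset U) : Prop :=
  ¬Delta 𝒦 A B ∧ ¬Delta 𝒦 B A

/-- Any two incomparable members of `ℋ` are distant. -/
def DistantFamily [DecidableEq U] (𝒦 ℋ : Finset (Finset U)) : Prop :=
  ∀ A ∈ ℋ, ∀ B ∈ ℋ, ¬A ⊆ B → ¬B ⊆ A → Distant 𝒦 A B

/-- A proximity domain: connective and `δ` symmetric on nonempty members of `𝒞`. -/
def ProximityDomain [DecidableEq U] (𝒞 𝒦 : Finset (Finset U)) : Prop :=
  Connective 𝒞 𝒦 ∧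
    ∀ A ∈ 𝒞, ∀ B ∈ 𝒞, A.Nonempty → B.Nonempty → (Delta 𝒦 A B ↔ Delta 𝒦 B A)

lemma exists_cover_le [DecidableEq U] (𝒦 : Finset (Finset U)) {A K' : Finset U}
    (hK' : K' ∈ 𝒦) (hAK' : A ⊂ K') :
    ∃ K ∈ 𝒦, Covers 𝒦 A K ∧ K ⊆ K' := by
  classical
  have hne : (𝒦.filter (fun K => A ⊂ K ∧ K ⊆ K')).Nonempty :=
    ⟨K', by simp [hK', hAK']⟩
  obtain ⟨K, hK, hmin⟩ := Finset.exists_minimal hne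
  simp only [Finset.mem_filter] at hK
  refine ⟨K, hK.1, ⟨hK.2.1, ?_⟩, hK.2.2⟩
  intro K₃ h₃ hA₃ hss
  exact hss.2 (hmin (Finset.mem_filter.2 ⟨h₃, hA₃, hss.subset.trans hK.2.2⟩) hss.subset)

lemma island_delta_aux [DecidableEq U] {𝒞 𝒦 : Finset (Finset U)} {h : U → ℝ}
    (hconn : Connective 𝒞 𝒦) {A B : Finset U}
    (hA : IsIsland 𝒞 𝒦 h A) (hB : IsIsland 𝒞 𝒦 h B)
    (hBA : ¬B ⊆ A) (hd : Delta 𝒦 A B) :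
    ∃ u ∈ B, u ∉ A ∧ ∀ s ∈ A, h u < h s := by
  obtain ⟨K, hK𝒦, hAK, hKB⟩ := hd
  by_cases hint : (A ∩ B).Nonempty
  · obtain ⟨K', hK'𝒦, hAK', hK'sub⟩ := hconn A hA.1 B hB.1 hint hBA
    obtain ⟨K₁, hK₁𝒦, hcov, hK₁sub⟩ := exists_cover_le 𝒦 hK'𝒦 hAK'
    obtain ⟨u, huK₁, huA⟩ := Finset.exists_of_ssubset hcov.1
    have huB : u ∈ B := by
      have huAB : u ∈ A ∪ B := hK'sub (hK₁sub huK₁)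
      rcases Finset.mem_union.1 huAB with h' | h'
      · exact absurd h' huA
      · exact h'
    exact ⟨u, huB, huA,
      fun s hs => hA.2.2 K₁ hK₁𝒦 hcov u (Finset.mem_sdiff.2 ⟨huK₁, huA⟩) s hs⟩
  · rcases hAK with rfl | hcov
    · exact absurd hKB hint
    · obtain ⟨u, huK⟩ := hKB
      have huKmem : u ∈ K := (Finset.mem_inter.1 huK).1
      have huB : u ∈ B := (Finset.mem_inter.1 huK).2
      have huA : u ∉ A := fun hu => hint ⟨u, Finset.mem_inter.2 ⟨hu, huB⟩⟩
      exact ⟨u, huB, huA,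
        fun s hs => hA.2.2 K hK𝒦 hcov u (Finset.mem_sdiff.2 ⟨huKmem, huA⟩) s hs⟩

/-- in a proximity domain every system of islands is a distant family. -/
theorem systemOfIslands_distant [Fintype U] [DecidableEq U] [Nonempty U]
    (𝒞 𝒦 𝒮 : Finset (Finset U)) (hdom : IslandDomain 𝒞 𝒦)
    (hprox : ProximityDomain 𝒞 𝒦) (h𝒮 : IsSystemOfIslands 𝒞 𝒦 𝒮) :
    DistantFamily 𝒦 𝒮 := by
  obtain ⟨h, hmem⟩ := h𝒮
  intro A hA B hB hAB hBA
  have hA' := (hmem A).1 hA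
  have hB' := (hmem B).1 hB
  have hsym := hprox.2 A hA'.1 B hB'.1 hA'.2.1 hB'.2.1
  have key : ¬Delta 𝒦 A B := by
    intro hd
    obtain ⟨u, huB, huA, hu⟩ := island_delta_aux hprox.1 hA' hB' hBA hd
    obtain ⟨v, hvA, hvB, hv⟩ := island_delta_aux hprox.1 hB' hA' hAB (hsym.1 hd)
    exact absurd (lt_trans (hu v hvA) (hv u huB)) (lt_irrefl _)
  exact ⟨key, fun hd => key (hsym.2 hd)⟩
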